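/- In the single-cell nearest-neighbour setting, the coarse-grained three-body interaction between three adjacent cells with coarse values η₋, η, η₊ satisfies the exact identity E_{P̂_{η₋} ⊗ P̂_{η} ⊗ P̂_{η₊}}[ e^{−βK( τ₋(Q) τ(1) + τ(Q) τ₊(1) )} ] = a² · (1 − λ Φ^Q(η₋) Φ^1(η) − λ Φ^Q(η) Φ^1(η₊) + λ² Φ^Q(η₋) Φ^{1,Q}(η) Φ^1(η₊)), where τ₋, τ, τ₊ denote the configurations in the left, middle and right cells respectively. -/

import Mathlib

open Finset

/-- The spin value of a site: `true ↦ +1`, `false ↦ -1`. -/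
def spin (b : Bool) : ℤ := if b then 1 else -1

/-- Configurations of a `Q`-site cell with total magnetization `η`. -/
def cellSet (Q : ℕ) (η : ℤ) : Finset (Fin Q → Bool) :=
  univ.filter (fun τ => ∑ i, spin (τ i) = η)

/-- The first site of the cell. -/
def site1 (Q : ℕ) (hQ : 0 < Q) : Fin Q := ⟨0, hQ⟩

/-- The last site of the cell. -/
def siteQ (Q : ℕ) (hQ : 0 < Q) : Fin Q := ⟨Q - 1, Nat.sub_lt hQ one_pos⟩

/-- The internal nearest-neighbour Hamiltonian `h(τ) = K Σ_{i=1}^{Q-1} τ(i) τ(i+1)`. -/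
noncomputable def hcell (K : ℝ) (Q : ℕ) (τ : Fin Q → Bool) : ℝ :=
  K * ∑ i : Fin (Q - 1),
    ((spin (τ ⟨i.val, by have := i.isLt; omega⟩) : ℝ) *
     (spin (τ ⟨i.val + 1, by have := i.isLt; omega⟩) : ℝ))

/-- The free-boundary single-cell partition function `Ẑ(η)`. -/
noncomputable def Zhat (β K : ℝ) (Q : ℕ) (η : ℤ) : ℝ :=
  ∑ τ ∈ cellSet Q η, Real.exp (-β * hcell K Q τ)

/-- `Φ^1(η)`: expectation of the first spin under `P̂_η`. -/
noncomputable def Phi1 (β K : ℝ) (Q : ℕ) (hQ : 0 < Q) (η : ℤ) : ℝ :=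
  (∑ τ ∈ cellSet Q η, (spin (τ (site1 Q hQ)) : ℝ) * Real.exp (-β * hcell K Q τ)) /
    Zhat β K Q η

/-- `Φ^Q(η)`: expectation of the last spin under `P̂_η`. -/
noncomputable def PhiQ (β K : ℝ) (Q : ℕ) (hQ : 0 < Q) (η : ℤ) : ℝ :=
  (∑ τ ∈ cellSet Q η, (spin (τ (siteQ Q hQ)) : ℝ) * Real.exp (-β * hcell K Q τ)) /
    Zhat β K Q η

/-- `Φ^{1,Q}(η)`: expectation of the product of the endpoint spins under `P̂_η`. -/
noncomputable def Phi1Q (β K : ℝ) (Q : ℕ) (hQ : 0 < Q) (η : ℤ) : ℝ :=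
  (∑ τ ∈ cellSet Q η,
      ((spin (τ (site1 Q hQ)) * spin (τ (siteQ Q hQ)) : ℤ) : ℝ) *
        Real.exp (-β * hcell K Q τ)) /
    Zhat β K Q η

/-- The single-cell partition function with boundary conditions `s₋, s₊ ∈ {-1,0,+1}`
(`0` encoding a free boundary). -/
noncomputable def ZB (β K : ℝ) (Q : ℕ) (hQ : 0 < Q) (η : ℤ) (sm sp : ℝ) : ℝ :=
  ∑ τ ∈ cellSet Q η,
    Real.exp (-β * (K * sm * (spin (τ (site1 Q hQ)) : ℝ) + hcell K Q τ +
      K * (spin (τ (siteQ Q hQ)) : ℝ) * sp))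

private lemma tri {α : Type*} (A B C : Finset α) (f g h : α → ℝ) :
    ∑ a ∈ A, ∑ b ∈ B, ∑ c ∈ C, f a * g b * h c
      = (∑ a ∈ A, f a) * (∑ b ∈ B, g b) * (∑ c ∈ C, h c) := by
  rw [Finset.sum_mul_sum, Finset.sum_mul]
  exact Finset.sum_congr rfl fun a _ => by
    rw [Finset.sum_mul]
    exact Finset.sum_congr rfl fun b _ => (Finset.mul_sum _ _ _).symm

private lemma spin_cases (b : Bool) : (spin b : ℝ) = 1 ∨ (spin b : ℝ) = -1 := by
  cases b <;> simp [spin]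

private lemma mul_spin_cases (b c : Bool) :
    (spin b : ℝ) * (spin c : ℝ) = 1 ∨ (spin b : ℝ) * (spin c : ℝ) = -1 := by
  rcases spin_cases b with h | h <;> rcases spin_cases c with h' | h' <;>
    rw [h, h'] <;> norm_num

private lemma cosh_mul_tanh (x : ℝ) : Real.cosh x * Real.tanh x = Real.sinh x := by
  rw [Real.tanh_eq_sinh_div_cosh]; field_simp

private lemma exp_factor (x u : ℝ) (hu : u = 1 ∨ u = -1) :
    Real.exp (-(x * u)) = Real.cosh x * (1 - Real.tanh x * u) := by
  rcases hu with h | h <;> subst h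
  · rw [mul_one, mul_one, mul_sub, mul_one, cosh_mul_tanh, Real.cosh_sub_sinh]
  · rw [mul_neg_one, neg_neg, mul_neg_one, sub_neg_eq_add, mul_add, mul_one,
      cosh_mul_tanh, Real.cosh_add_sinh]

private lemma cell_nonempty (Q : ℕ) (η : ℤ) (h1 : |η| ≤ (Q : ℤ))
    (h2 : (η + Q) % 2 = 0) : (cellSet Q η).Nonempty := by
  obtain ⟨k, hk2, hkQ⟩ : ∃ k : ℕ, 2 * (k : ℤ) = η + Q ∧ k ≤ Q := by
    have h1' := abs_le.mp h1
    exact ⟨((η + Q) / 2).toNat, by omega, by omega⟩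
  refine ⟨fun i => decide ((i : ℕ) < k), ?_⟩
  simp only [cellSet, mem_filter, mem_univ, true_and]
  have : ∀ i : Fin Q, spin (decide ((i : ℕ) < k)) = if (i : ℕ) < k then 1 else -1 := by
    intro i; by_cases h : (i : ℕ) < k <;> simp [spin, h]
  rw [Finset.sum_congr rfl fun i _ => this i]
  rw [Fin.sum_univ_eq_sum_range (fun n => if n < k then (1 : ℤ) else -1)]
  rw [Finset.range_eq_Ico, ← Finset.sum_Ico_consecutive _ (Nat.zero_le k) hkQ]
  have hA : ∑ i ∈ Finset.Ico 0 k, (if i < k then (1 : ℤ) else -1) = k := by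
    rw [Finset.sum_congr rfl fun i hi => if_pos (Finset.mem_Ico.mp hi).2]
    simp
  have hB : ∑ i ∈ Finset.Ico k Q, (if i < k then (1 : ℤ) else -1) = -((Q : ℤ) - k) := by
    rw [Finset.sum_congr rfl fun i hi =>
      if_neg (by exact Nat.not_lt.mpr (Finset.mem_Ico.mp hi).1)]
    simp [Nat.cast_sub hkQ]
  rw [hA, hB]; omega

private lemma Zhat_pos {β K : ℝ} {Q : ℕ} {η : ℤ} (h : (cellSet Q η).Nonempty) :
    0 < Zhat β K Q η :=
  Finset.sum_pos (fun _ _ => Real.exp_pos _) h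

/-- the coarse-grained three-body interaction between three adjacent cells
reduces to endpoint correlation functions, with `a = cosh(βK)` and `λ = tanh(βK)`. -/
theorem statement13 (β K : ℝ) (hβ : 0 < β) (Q : ℕ) (hQ : 2 ≤ Q)
    (ηm η ηp : ℤ)
    (hηm : |ηm| ≤ (Q : ℤ)) (hη : |η| ≤ (Q : ℤ)) (hηp : |ηp| ≤ (Q : ℤ))
    (hparm : (ηm + Q) % 2 = 0) (hpar : (η + Q) % 2 = 0) (hparp : (ηp + Q) % 2 = 0) :
    (∑ τm ∈ cellSet Q ηm, ∑ τ ∈ cellSet Q η, ∑ τp ∈ cellSet Q ηp,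
        Real.exp (-β * hcell K Q τm) * Real.exp (-β * hcell K Q τ) *
          Real.exp (-β * hcell K Q τp) *
          Real.exp (-β * (K * (((spin (τm (siteQ Q (by omega))) : ℝ) *
              (spin (τ (site1 Q (by omega))) : ℝ)) +
            ((spin (τ (siteQ Q (by omega))) : ℝ) *
              (spin (τp (site1 Q (by omega))) : ℝ))))))
      / (Zhat β K Q ηm * Zhat β K Q η * Zhat β K Q ηp)
    = Real.cosh (β * K) ^ 2 *
        (1 - Real.tanh (β * K) * PhiQ β K Q (by omega) ηm * Phi1 β K Q (by omega) η
           - Real.tanh (β * K) * PhiQ β K Q (by omega) η * Phi1 β K Q (by omega) ηp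
           + Real.tanh (β * K) ^ 2 * PhiQ β K Q (by omega) ηm *
               Phi1Q β K Q (by omega) η * Phi1 β K Q (by omega) ηp) := by

  have hQ0 : 0 < Q := by omega
  have hZm : 0 < Zhat β K Q ηm := Zhat_pos (cell_nonempty Q ηm hηm hparm)
  have hZ : 0 < Zhat β K Q η := Zhat_pos (cell_nonempty Q η hη hpar)
  have hZp : 0 < Zhat β K Q ηp := Zhat_pos (cell_nonempty Q ηp hηp hparp)
  have key : (∑ τm ∈ cellSet Q ηm, ∑ τ ∈ cellSet Q η, ∑ τp ∈ cellSet Q ηp,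
        Real.exp (-β * hcell K Q τm) * Real.exp (-β * hcell K Q τ) *
          Real.exp (-β * hcell K Q τp) *
          Real.exp (-β * (K * (((spin (τm (siteQ Q hQ0)) : ℝ) *
              (spin (τ (site1 Q hQ0)) : ℝ)) +
            ((spin (τ (siteQ Q hQ0)) : ℝ) *
              (spin (τp (site1 Q hQ0)) : ℝ))))))
      = Real.cosh (β * K) ^ 2 * (Zhat β K Q ηm * Zhat β K Q η * Zhat β K Q ηp)
        - Real.cosh (β * K) ^ 2 * Real.tanh (β * K) *
            ((∑ τ ∈ cellSet Q ηm, (spin (τ (siteQ Q hQ0)) : ℝ) * Real.exp (-β * hcell K Q τ)) *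
             (∑ τ ∈ cellSet Q η, (spin (τ (site1 Q hQ0)) : ℝ) * Real.exp (-β * hcell K Q τ)) *
             Zhat β K Q ηp)
        - Real.cosh (β * K) ^ 2 * Real.tanh (β * K) *
            (Zhat β K Q ηm *
             (∑ τ ∈ cellSet Q η, (spin (τ (siteQ Q hQ0)) : ℝ) * Real.exp (-β * hcell K Q τ)) *
             (∑ τ ∈ cellSet Q ηp, (spin (τ (site1 Q hQ0)) : ℝ) * Real.exp (-β * hcell K Q τ)))
        + Real.cosh (β * K) ^ 2 * Real.tanh (β * K) ^ 2 *
            ((∑ τ ∈ cellSet Q ηm, (spin (τ (siteQ Q hQ0)) : ℝ) * Real.exp (-β * hcell K Q τ)) *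
             (∑ τ ∈ cellSet Q η, ((spin (τ (site1 Q hQ0)) : ℝ) * (spin (τ (siteQ Q hQ0)) : ℝ)) *
               Real.exp (-β * hcell K Q τ)) *
             (∑ τ ∈ cellSet Q ηp, (spin (τ (site1 Q hQ0)) : ℝ) * Real.exp (-β * hcell K Q τ))) := by
    simp only [Zhat]
    rw [← tri (cellSet Q ηm) (cellSet Q η) (cellSet Q ηp)
          (fun τ => Real.exp (-β * hcell K Q τ)) (fun τ => Real.exp (-β * hcell K Q τ))
          (fun τ => Real.exp (-β * hcell K Q τ)),
        ← tri (cellSet Q ηm) (cellSet Q η) (cellSet Q ηp)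
          (fun τ => (spin (τ (siteQ Q hQ0)) : ℝ) * Real.exp (-β * hcell K Q τ))
          (fun τ => (spin (τ (site1 Q hQ0)) : ℝ) * Real.exp (-β * hcell K Q τ))
          (fun τ => Real.exp (-β * hcell K Q τ)),
        ← tri (cellSet Q ηm) (cellSet Q η) (cellSet Q ηp)
          (fun τ => Real.exp (-β * hcell K Q τ))
          (fun τ => (spin (τ (siteQ Q hQ0)) : ℝ) * Real.exp (-β * hcell K Q τ))
          (fun τ => (spin (τ (site1 Q hQ0)) : ℝ) * Real.exp (-β * hcell K Q τ)),
        ← tri (cellSet Q ηm) (cellSet Q η) (cellSet Q ηp)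
          (fun τ => (spin (τ (siteQ Q hQ0)) : ℝ) * Real.exp (-β * hcell K Q τ))
          (fun τ => ((spin (τ (site1 Q hQ0)) : ℝ) * (spin (τ (siteQ Q hQ0)) : ℝ)) *
            Real.exp (-β * hcell K Q τ))
          (fun τ => (spin (τ (site1 Q hQ0)) : ℝ) * Real.exp (-β * hcell K Q τ))]
    simp only [Finset.mul_sum, ← Finset.sum_sub_distrib, ← Finset.sum_add_distrib]
    refine Finset.sum_congr rfl fun τm _ => Finset.sum_congr rfl fun τ _ =>
      Finset.sum_congr rfl fun τp _ => ?_
    rw [show -β * (K * ((spin (τm (siteQ Q hQ0)) : ℝ) * (spin (τ (site1 Q hQ0)) : ℝ) +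
          (spin (τ (siteQ Q hQ0)) : ℝ) * (spin (τp (site1 Q hQ0)) : ℝ)))
        = -(β * K * ((spin (τm (siteQ Q hQ0)) : ℝ) * (spin (τ (site1 Q hQ0)) : ℝ)))
          + -(β * K * ((spin (τ (siteQ Q hQ0)) : ℝ) * (spin (τp (site1 Q hQ0)) : ℝ))) by ring,
      Real.exp_add, exp_factor (β * K) _ (mul_spin_cases _ _),
      exp_factor (β * K) _ (mul_spin_cases _ _)]
    ring
  have hne : Zhat β K Q ηm * Zhat β K Q η * Zhat β K Q ηp ≠ 0 :=
    mul_ne_zero (mul_ne_zero hZm.ne' hZ.ne') hZp.ne'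
  rw [div_eq_iff hne]
  refine key.trans ?_
  simp only [Phi1, PhiQ, Phi1Q]
  push_cast
  field_simp
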